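/- For every propositional formula φ, φ is classically equivalent to the conjunction of the set φ* of all consequences of φ written only in essential atoms of φ; moreover, for every formula φ' classically equivalent to φ, the set of atoms occurring in members of φ* is contained in the set of atoms occurring in φ'. -/
import Mathlib


inductive Fml (α : Type) : Type
  | atom : α → Fml α
  | top : Fml α
  | bot : Fml α
  | neg : Fml α → Fml α
  | and : Fml α → Fml α → Fml α
  | or : Fml α → Fml α → Fml α

def Fml.eval {α : Type} (v : α → Bool) : Fml α → Bool
  | .atom p => v p
  | .top => true
  | .bot => false
  | .neg φ => !(Fml.eval v φ)
  | .and φ ψ => Fml.eval v φ && Fml.eval v ψ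
  | .or φ ψ => Fml.eval v φ || Fml.eval v ψ

/-- The set of atoms actually occurring in a formula. -/
def Fml.atoms {α : Type} : Fml α → Set α
  | .atom p => {p}
  | .top => ∅
  | .bot => ∅
  | .neg φ => Fml.atoms φ
  | .and φ ψ => Fml.atoms φ ∪ Fml.atoms ψ
  | .or φ ψ => Fml.atoms φ ∪ Fml.atoms ψ

/-- Classical (propositional) entailment. -/
def Fml.entails {α : Type} (φ ψ : Fml α) : Prop :=
  ∀ v : α → Bool, Fml.eval v φ = true → Fml.eval v ψ = true

/-- Classical equivalence. -/
def Fml.equiv {α : Type} (φ ψ : Fml α) : Prop :=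
  ∀ v : α → Bool, Fml.eval v φ = Fml.eval v ψ

/-- An atom is essential to `φ` iff it occurs in every formula classically equivalent to `φ`. -/
def essential {α : Type} (p : α) (φ : Fml α) : Prop :=
  ∀ ψ : Fml α, Fml.equiv φ ψ → p ∈ Fml.atoms ψ

/-- `φ* `: all classical consequences of `φ` written only in essential atoms of `φ`. -/
def star {α : Type} (φ : Fml α) : Set (Fml α) :=
  {ψ | Fml.entails φ ψ ∧ Fml.atoms ψ ⊆ {p | essential p φ}}

open Classical

/-- List of atoms of a formula. -/
def Fml.atomList {α : Type} : Fml α → List α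
  | .atom p => [p]
  | .top => []
  | .bot => []
  | .neg φ => Fml.atomList φ
  | .and φ ψ => Fml.atomList φ ++ Fml.atomList ψ
  | .or φ ψ => Fml.atomList φ ++ Fml.atomList ψ

lemma mem_atomList {α : Type} (φ : Fml α) (p : α) :
    p ∈ Fml.atoms φ ↔ p ∈ Fml.atomList φ := by
  induction φ with
  | atom q => simp [Fml.atoms, Fml.atomList]
  | top => simp [Fml.atoms, Fml.atomList]
  | bot => simp [Fml.atoms, Fml.atomList]
  | neg φ ih => simpa [Fml.atoms, Fml.atomList] using ih
  | and φ ψ ih1 ih2 => simp [Fml.atoms, Fml.atomList, ih1, ih2]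
  | or φ ψ ih1 ih2 => simp [Fml.atoms, Fml.atomList, ih1, ih2]

lemma eval_congr {α : Type} (φ : Fml α) (v w : α → Bool)
    (h : ∀ p ∈ Fml.atoms φ, v p = w p) : Fml.eval v φ = Fml.eval w φ := by
  induction φ with
  | atom q => exact h q rfl
  | top => rfl
  | bot => rfl
  | neg φ ih => simp [Fml.eval, ih h]
  | and φ ψ ih1 ih2 =>
      simp only [Fml.eval]
      rw [ih1 (fun p hp => h p (Or.inl hp)), ih2 (fun p hp => h p (Or.inr hp))]
  | or φ ψ ih1 ih2 =>
      simp only [Fml.eval]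
      rw [ih1 (fun p hp => h p (Or.inl hp)), ih2 (fun p hp => h p (Or.inr hp))]

/-- Changing the value of a single inessential atom does not change the evaluation. -/
lemma eval_step {α : Type} (φ : Fml α) (p : α) (hp : ¬ essential p φ)
    (v w : α → Bool) (h : ∀ q, q ≠ p → v q = w q) :
    Fml.eval v φ = Fml.eval w φ := by
  simp only [essential, not_forall] at hp
  obtain ⟨ψ, hequiv, hnot⟩ := hp
  calc Fml.eval v φ = Fml.eval v ψ := hequiv v
    _ = Fml.eval w ψ := eval_congr ψ v w (fun q hq => h q (fun e => hnot (e ▸ hq)))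
    _ = Fml.eval w φ := (hequiv w).symm

lemma eval_interp {α : Type} (φ : Fml α) (v w : α → Bool)
    (h : ∀ p, essential p φ → v p = w p) :
    ∀ L : List α, Fml.eval v φ = Fml.eval (fun p => if p ∈ L then w p else v p) φ := by
  intro L
  induction L with
  | nil => exact eval_congr _ _ _ (by simp)
  | cons q L' ih =>
      rw [ih]
      by_cases hq : essential q φ
      · refine eval_congr _ _ _ (fun p _ => ?_)
        by_cases hpq : p = q
        · subst hpq
          by_cases hpl : p ∈ L' <;> simp [hpl, h p hq]
        · simp [List.mem_cons, hpq]
      · refine eval_step φ q hq _ _ (fun r hr => ?_)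
        simp [List.mem_cons, hr]

/-- Evaluation depends only on the values of essential atoms. -/
lemma eval_essential_congr {α : Type} (φ : Fml α) (v w : α → Bool)
    (h : ∀ p, essential p φ → v p = w p) :
    Fml.eval v φ = Fml.eval w φ := by
  rw [eval_interp φ v w h (Fml.atomList φ)]
  refine eval_congr _ _ _ (fun p hp => ?_)
  simp [(mem_atomList φ p).mp hp]

/-- Conjunction of literals describing a valuation on a list of atoms. -/
def conjLits {α : Type} (v : α → Bool) : List α → Fml α
  | [] => .top
  | p :: L => .and (if v p then .atom p else .neg (.atom p)) (conjLits v L)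

lemma eval_conjLits {α : Type} (v w : α → Bool) (L : List α) :
    Fml.eval w (conjLits v L) = true ↔ ∀ p ∈ L, w p = v p := by
  induction L with
  | nil => simp [conjLits, Fml.eval]
  | cons q L' ih =>
      by_cases hq : v q = true
      · simp [conjLits, Fml.eval, hq, ih]
      · simp only [Bool.not_eq_true] at hq
        simp [conjLits, Fml.eval, hq, ih]

lemma atoms_conjLits {α : Type} (v : α → Bool) (L : List α) :
    Fml.atoms (conjLits v L) ⊆ {p | p ∈ L} := by
  induction L with
  | nil => simp [conjLits, Fml.atoms]
  | cons q L' ih =>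
      intro p hp
      rcases hp with hp | hp
      · by_cases hq : v q = true <;> simp_all [Fml.atoms]
      · exact List.mem_cons_of_mem _ (ih hp)

/-- Least atom-set theorem: `φ` is classically equivalent to the conjunction of `φ*`, and
for every `φ'` classically equivalent to `φ`, the atoms occurring in members of `φ*` are
contained in the atoms of `φ'`. -/
theorem least_atom_set {α : Type} (φ : Fml α) :
    (∀ v : α → Bool, Fml.eval v φ = true ↔ ∀ ψ ∈ star φ, Fml.eval v ψ = true) ∧
    (∀ φ' : Fml α, Fml.equiv φ φ' → (⋃ ψ ∈ star φ, Fml.atoms ψ) ⊆ Fml.atoms φ') := by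
  constructor
  · intro v
    constructor
    · intro hv ψ hψ
      exact hψ.1 v hv
    · intro hall
      by_contra hfalse
      -- the essential atoms of φ occurring in φ
      set L : List α := (Fml.atomList φ).filter (fun p => decide (essential p φ)) with hL
      have hLmem : ∀ p, p ∈ L ↔ (p ∈ Fml.atomList φ ∧ essential p φ) := by
        intro p; simp [hL, List.mem_filter]
      -- the witness formula
      set ψ : Fml α := .neg (conjLits v L) with hψdef
      have hψstar : ψ ∈ star φ := by
        constructor
        · intro w hw
          simp only [hψdef, Fml.eval, Bool.not_eq_true']
          by_contra hc
          simp only [Bool.not_eq_false] at hc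
          have hagree := (eval_conjLits v w L).mp hc
          have : Fml.eval w φ = Fml.eval v φ := by
            refine eval_essential_congr φ w v (fun p hp => ?_)
            have hpL : p ∈ L := (hLmem p).mpr ⟨(mem_atomList φ p).mp (hp φ (fun _ => rfl)), hp⟩
            exact hagree p hpL
          rw [hw] at this
          exact hfalse this.symm
        · intro p hp
          have hp' : p ∈ Fml.atoms (conjLits v L) := hp
          have := atoms_conjLits v L hp'
          exact ((hLmem p).mp this).2
      have := hall ψ hψstar
      simp only [hψdef, Fml.eval, Bool.not_eq_true'] at this
      rw [(eval_conjLits v v L).mpr (fun p _ => rfl)] at this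
      simp at this
  · intro φ' hequiv
    intro p hp
    simp only [Set.mem_iUnion] at hp
    obtain ⟨ψ, hψ, hpψ⟩ := hp
    exact hψ.2 hpψ φ' hequiv
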